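/- Let E be a metric space, I a nonempty index set, and (μ_i)_{i∈I} a uniformly tight family of Borel probability measures on E, i.e., for every ε > 0 there is a compact set K ⊆ E with sup_{i∈I} μ_i(E \ K) ≤ ε. Let Φ be a nonempty family of continuous functions from E to ℝ that is directed downward (for all φ, ψ ∈ Φ there exists χ ∈ Φ with χ(x) ≤ min(φ(x), ψ(x)) for all x ∈ E), and assume the pointwise infimum φ*(x) := inf{φ(x) : φ ∈ Φ} is real-valued and continuous on E. Then there exists a sequence (φ_n)_{n∈ℕ} in Φ with φ_{n+1} ≤ φ_n pointwise such that for every ε > 0, lim_{n→∞} sup_{i∈I} μ_i({x ∈ E : φ_n(x) − φ*(x) ≥ ε}) = 0. -/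

import Mathlib

open MeasureTheory Filter

/-- For a uniformly tight family `(μ i)` of Borel probability measures on a metric space and
a nonempty downward-directed family `Φ` of continuous functions with real-valued continuous
pointwise infimum `φs`, there is a pointwise decreasing sequence `(φ n)` in `Φ` converging to
`φs` in capacity: for every `ε > 0`, `sup_i μ_i {φ n - φs ≥ ε} → 0`. -/
theorem stmt2 {E : Type*} [MetricSpace E] [MeasurableSpace E] [BorelSpace E]
    {I : Type*} [Nonempty I]
    (μ : I → Measure E) [∀ i, IsProbabilityMeasure (μ i)]
    (htight : ∀ ε : ENNReal, 0 < ε → ∃ K : Set E, IsCompact K ∧ ⨆ i, μ i Kᶜ ≤ ε)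
    (Φ : Set (E → ℝ)) (hΦne : Φ.Nonempty)
    (hcont : ∀ φ ∈ Φ, Continuous φ)
    (hdir : ∀ φ ∈ Φ, ∀ ψ ∈ Φ, ∃ χ ∈ Φ, ∀ x, χ x ≤ min (φ x) (ψ x))
    (φs : E → ℝ) (hglb : ∀ x, IsGLB ((fun φ : E → ℝ => φ x) '' Φ) (φs x))
    (hφscont : Continuous φs) :
    ∃ φ : ℕ → E → ℝ, (∀ n, φ n ∈ Φ) ∧ (∀ n x, φ (n + 1) x ≤ φ n x) ∧
      ∀ ε : ℝ, 0 < ε →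
        Tendsto (fun n => ⨆ i, μ i {x | ε ≤ φ n x - φs x}) atTop (nhds 0) := by
  classical
  -- Key lemma: Dini-type argument on a compact set
  have key : ∀ g ∈ Φ, ∀ K : Set E, IsCompact K → ∀ δ : ℝ, 0 < δ →
      ∃ f ∈ Φ, (∀ x, f x ≤ g x) ∧ ∀ x ∈ K, f x - φs x < δ := by
    intro g hg K hK δ hδ
    have h1 : ∀ x : E, ∃ f ∈ Φ, f x < φs x + δ / 2 := by
      intro x
      obtain ⟨c, hc, hlt⟩ := (hglb x).exists_between (show φs x < φs x + δ / 2 by linarith)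
      obtain ⟨f, hf, rfl⟩ := hc
      exact ⟨f, hf, hlt.2⟩
    choose f hfΦ hfx using h1
    have hUopen : ∀ x : E, IsOpen {y | f x y - φs y < δ} := fun x =>
      isOpen_lt ((hcont _ (hfΦ x)).sub hφscont) continuous_const
    have hxU : ∀ x : E, x ∈ {y | f x y - φs y < δ} := by
      intro x; have := hfx x; simp only [Set.mem_setOf_eq]; linarith
    have hcover : K ⊆ ⋃ x : E, {y | f x y - φs y < δ} := fun x _ =>
      Set.mem_iUnion.2 ⟨x, hxU x⟩
    obtain ⟨t, ht⟩ := hK.elim_finite_subcover _ hUopen hcover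
    have hfin : ∀ s : Finset E, ∃ χ ∈ Φ, (∀ x, χ x ≤ g x) ∧ ∀ a ∈ s, ∀ x, χ x ≤ f a x := by
      intro s
      induction s using Finset.induction with
      | empty => exact ⟨g, hg, fun x => le_rfl, by simp⟩
      | insert _ _ ha ih =>
        obtain ⟨χ, hχ, hχg, hχt⟩ := ih
        obtain ⟨χ', hχ', hmin⟩ := hdir χ hχ _ (hfΦ _)
        refine ⟨χ', hχ', fun x => le_trans ((hmin x).trans (min_le_left _ _)) (hχg x), ?_⟩
        intro b hb x
        rcases Finset.mem_insert.1 hb with rfl | hb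
        · exact (hmin x).trans (min_le_right _ _)
        · exact le_trans ((hmin x).trans (min_le_left _ _)) (hχt b hb x)
    obtain ⟨χ, hχ, hχg, hχt⟩ := hfin t
    refine ⟨χ, hχ, hχg, ?_⟩
    intro y hy
    obtain ⟨a, ha, hya⟩ := Set.mem_iUnion₂.1 (ht hy)
    calc χ y - φs y ≤ f a y - φs y := by linarith [hχt a ha y]
      _ < δ := hya
  -- compact sets from tightness
  have hpos : ∀ n : ℕ, (0 : ENNReal) < 2⁻¹ ^ n :=
    fun n => ENNReal.pow_pos (ENNReal.inv_pos.2 ENNReal.ofNat_ne_top) n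
  choose K hKc hKμ using fun n : ℕ => htight (2⁻¹ ^ n) (hpos n)
  obtain ⟨ψ0, hψ0⟩ := hΦne
  -- step function
  have step : ∀ (n : ℕ) (g : E → ℝ), g ∈ Φ →
      ∃ f, f ∈ Φ ∧ (∀ x, f x ≤ g x) ∧ ∀ x ∈ K n, f x - φs x < 1 / (n + 1) := by
    intro n g hg
    obtain ⟨f, hf, h1, h2⟩ := key g hg (K n) (hKc n) (1 / (n + 1)) (by positivity)
    exact ⟨f, hf, h1, h2⟩
  choose! F hF1 hF2 hF3 using step
  set φf : ℕ → E → ℝ := fun n => Nat.rec (F 0 ψ0) (fun k ih => F (k + 1) ih) n with hφf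
  have hmem : ∀ n, φf n ∈ Φ := by
    intro n
    induction n with
    | zero => exact hF1 0 ψ0 hψ0
    | succ k ih => exact hF1 (k + 1) (φf k) ih
  have hdec : ∀ n x, φf (n + 1) x ≤ φf n x := fun n x => hF2 (n + 1) (φf n) (hmem n) x
  have hKprop : ∀ n, ∀ x ∈ K n, φf n x - φs x < 1 / (n + 1) := by
    intro n
    cases n with
    | zero => exact hF3 0 ψ0 hψ0
    | succ k => exact hF3 (k + 1) (φf k) (hmem k)
  refine ⟨φf, hmem, hdec, ?_⟩
  intro ε hε
  have hbound : ∀ᶠ n in atTop, ⨆ i, μ i {x | ε ≤ φf n x - φs x} ≤ 2⁻¹ ^ n := by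
    obtain ⟨N, hN⟩ := exists_nat_one_div_lt hε
    filter_upwards [eventually_ge_atTop N] with n hn
    have hsub : {x | ε ≤ φf n x - φs x} ⊆ (K n)ᶜ := by
      intro x hx hxK
      have h1 := hKprop n x hxK
      have h2 : (1 : ℝ) / (n + 1) ≤ 1 / (N + 1) := by
        apply one_div_le_one_div_of_le
        · positivity
        · exact_mod_cast by omega
      simp only [Set.mem_setOf_eq] at hx
      linarith
    exact le_trans (iSup_mono fun i => measure_mono hsub) (hKμ n)
  refine tendsto_of_tendsto_of_tendsto_of_le_of_le' tendsto_const_nhds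
    (ENNReal.tendsto_pow_atTop_nhds_zero_of_lt_one ?_)
    (Eventually.of_forall fun n => zero_le) hbound
  simp [ENNReal.inv_lt_one, one_lt_two]
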